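/- Let V be a real normed vector space, Λ ∈ ℂ, w : V → ℂ, and x ∈ V such that w is differentiable at x and w x ≠ 0. Then ((w x)³ − Λ/3) • fderiv ℝ (fun y => 4·((w y)³ − Λ/3)/(w y)²) x = fderiv ℝ (fun y => ((w y)³ + 2·Λ/3)²/(w y)²) x. -/

import Mathlib

theorem stmt_11 {V : Type*} [NormedAddCommGroup V] [NormedSpace ℝ V]
    (Λ : ℂ) (w : V → ℂ) (x : V) (hw : DifferentiableAt ℝ w x) (hw0 : w x ≠ 0) :
    ((w x) ^ 3 - Λ / 3) • fderiv ℝ (fun y => 4 * ((w y) ^ 3 - Λ / 3) / (w y) ^ 2) x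
      = fderiv ℝ (fun y => ((w y) ^ 3 + 2 * Λ / 3) ^ 2 / (w y) ^ 2) x := by
  set c := w x with hc
  have hL := hw.hasFDerivAt
  have hv : HasDerivAt (fun z : ℂ => z ^ 2) (2 * c) c := by
    simpa using hasDerivAt_pow 2 c
  have hg1 : HasDerivAt (fun z : ℂ => 4 * (z ^ 3 - Λ / 3) / z ^ 2)
      ((12 * c ^ 2 * c ^ 2 - 4 * (c ^ 3 - Λ / 3) * (2 * c)) / (c ^ 2) ^ 2) c := by
    have hu : HasDerivAt (fun z : ℂ => 4 * (z ^ 3 - Λ / 3)) (12 * c ^ 2) c := by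
      have := ((hasDerivAt_pow 3 c).sub_const (Λ / 3)).const_mul (4 : ℂ)
      exact this.congr_deriv (by push_cast; ring)
    exact hu.div hv (pow_ne_zero 2 hw0)
  have hg2 : HasDerivAt (fun z : ℂ => (z ^ 3 + 2 * Λ / 3) ^ 2 / z ^ 2)
      ((2 * (c ^ 3 + 2 * Λ / 3) * (3 * c ^ 2) * c ^ 2
        - (c ^ 3 + 2 * Λ / 3) ^ 2 * (2 * c)) / (c ^ 2) ^ 2) c := by
    have hu : HasDerivAt (fun z : ℂ => (z ^ 3 + 2 * Λ / 3) ^ 2)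
        (2 * (c ^ 3 + 2 * Λ / 3) * (3 * c ^ 2)) c := by
      have hin : HasDerivAt (fun z : ℂ => z ^ 3 + 2 * Λ / 3) (3 * c ^ 2) c := by
        have := (hasDerivAt_pow 3 c).add_const (2 * Λ / 3)
        exact this.congr_deriv (by norm_num)
      have := (hasDerivAt_pow 2 (c ^ 3 + 2 * Λ / 3)).comp c hin
      exact this.congr_deriv (by norm_num)
    exact hu.div hv (pow_ne_zero 2 hw0)
  have H1 := (hg1.comp_hasFDerivAt x hL).fderiv
  have H2 := (hg2.comp_hasFDerivAt x hL).fderiv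
  rw [show (fun y => 4 * ((w y) ^ 3 - Λ / 3) / (w y) ^ 2)
      = (fun z : ℂ => 4 * (z ^ 3 - Λ / 3) / z ^ 2) ∘ w from rfl, H1,
    show (fun y => ((w y) ^ 3 + 2 * Λ / 3) ^ 2 / (w y) ^ 2)
      = (fun z : ℂ => (z ^ 3 + 2 * Λ / 3) ^ 2 / z ^ 2) ∘ w from rfl, H2,
    smul_smul]
  congr 1
  field_simp
  ring
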